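/- Let f : {0,1}^n → {0,1} be balanced, and let U_1,…,U_m be unitaries on C^{2^n} yielding m mutually unbiased bases. Define ρ_y = (1/(2^{n−1} m)) Σ_{b=1}^m Σ_{x ∈ f^{−1}(y)} U_b|x⟩⟨x|U_b†. Then Tr((ρ₀ − ρ₁)²) = 4/(2^n m). -/

import Mathlib

open Matrix

/-- The average state `ρ_y = (1/(2^{n-1} m)) Σ_b Σ_{x ∈ f⁻¹(y)} U_b |x⟩⟨x| U_b†`
for a Boolean function `f` encoded in `m` bases. -/
noncomputable def rhoAvg (n m : ℕ)
    (U : Fin m → Matrix (Fin n → Bool) (Fin n → Bool) ℂ)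
    (f : (Fin n → Bool) → Bool) (y : Bool) :
    Matrix (Fin n → Bool) (Fin n → Bool) ℂ :=
  ((2 ^ (n - 1) * m : ℂ))⁻¹ •
    ∑ b, ∑ x ∈ Finset.univ.filter (fun x => f x = y),
      U b * Matrix.single x x 1 * (U b)ᴴ

/-- Trace of `D V D Vᴴ` for a diagonal matrix `D`. -/
lemma trace_diag_mul_diag_mul {α : Type*} [Fintype α] [DecidableEq α]
    (d : α → ℂ) (V : Matrix α α ℂ) :
    (Matrix.diagonal d * V * Matrix.diagonal d * Vᴴ).trace
      = ∑ i, ∑ j, d i * d j * (V i j * star (V i j)) := by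
  rw [Matrix.trace]
  refine Finset.sum_congr rfl fun i _ => ?_
  rw [Matrix.diag_apply, Matrix.mul_apply]
  refine Finset.sum_congr rfl fun j _ => ?_
  rw [Matrix.mul_diagonal, Matrix.diagonal_mul, Matrix.conjTranspose_apply]
  ring

/-- For a balanced Boolean function `f` on `n`-bit strings encoded in `m`
mutually unbiased bases, `Tr((ρ₀ − ρ₁)²) = 4/(2^n m)`. -/
theorem trace_sq_diff_balanced_mubs
    {n m : ℕ} (hn : 1 ≤ n) (hm : 1 ≤ m)
    (f : (Fin n → Bool) → Bool)
    (hf : ∀ y, (Finset.univ.filter (fun x => f x = y)).card = 2 ^ (n - 1))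
    (U : Fin m → Matrix (Fin n → Bool) (Fin n → Bool) ℂ)
    (hU : ∀ b, (U b)ᴴ * U b = 1 ∧ U b * (U b)ᴴ = 1)
    (hmub : ∀ b b', b ≠ b' → ∀ x x',
      ‖((U b)ᴴ * U b') x x'‖ ^ 2 = ((2 : ℝ) ^ n)⁻¹) :
    ((rhoAvg n m U f false - rhoAvg n m U f true)
      * (rhoAvg n m U f false - rhoAvg n m U f true)).trace
      = 4 / (2 ^ n * m) := by
  classical
  obtain ⟨k, rfl⟩ : ∃ k, n = k + 1 := ⟨n - 1, (Nat.succ_pred_eq_of_pos hn).symm⟩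
  set ε : (Fin (k+1) → Bool) → ℂ := fun x => if f x = false then (1:ℂ) else -1 with hε
  set D : Matrix (Fin (k+1) → Bool) (Fin (k+1) → Bool) ℂ := Matrix.diagonal ε with hDdef
  have hεsq : ∀ x, ε x * ε x = 1 := by
    intro x; by_cases h : f x = false <;> simp [hε, h]
  -- sum of ε is zero (balancedness)
  have hεsum : ∑ x, ε x = 0 := by
    rw [← Finset.sum_filter_add_sum_filter_not Finset.univ (fun x => f x = false)]
    have h1 : ∑ x ∈ Finset.univ.filter (fun x => f x = false), ε x = ((2:ℂ)^k) := by
      rw [Finset.sum_congr rfl (fun x hx => show ε x = 1 by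
        simp [hε, (Finset.mem_filter.mp hx).2]), Finset.sum_const]
      have := hf false
      simp only [Nat.add_sub_cancel] at this
      simp [this]
    have h2 : ∑ x ∈ Finset.univ.filter (fun x => ¬ f x = false), ε x = -((2:ℂ)^k) := by
      have hfil : Finset.univ.filter (fun x => ¬ f x = false)
          = Finset.univ.filter (fun x => f x = true) := by
        apply Finset.filter_congr
        intro x _
        cases h : f x <;> simp [h]
      rw [hfil, Finset.sum_congr rfl (fun x hx => show ε x = -1 by
        have := (Finset.mem_filter.mp hx).2
        simp [hε, this]), Finset.sum_const]
      have := hf true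
      simp only [Nat.add_sub_cancel] at this
      simp [this]
    rw [h1, h2]; ring
  -- the difference of the sums of projectors is the diagonal sign matrix
  have hdiag : (∑ x ∈ Finset.univ.filter (fun x => f x = false),
        Matrix.single x x (1:ℂ))
      - (∑ x ∈ Finset.univ.filter (fun x => f x = true),
        Matrix.single x x (1:ℂ)) = D := by
    ext i j
    simp only [Matrix.sub_apply, Matrix.sum_apply, hDdef, Matrix.diagonal_apply,
      Matrix.single, Matrix.of_apply]
    by_cases hij : i = j
    · subst hij
      simp only [and_self, if_true]
      rw [Finset.sum_ite_eq' (Finset.univ.filter (fun x => f x = false)) i (fun _ => (1:ℂ)),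
        Finset.sum_ite_eq' (Finset.univ.filter (fun x => f x = true)) i (fun _ => (1:ℂ))]
      by_cases h : f i = false <;> simp [hε, h]
    · have : ∀ (S : Finset (Fin (k+1) → Bool)),
          ∑ x ∈ S, (if x = i ∧ x = j then (1:ℂ) else 0) = 0 := by
        intro S
        apply Finset.sum_eq_zero
        intro x _
        have : ¬ (x = i ∧ x = j) := by rintro ⟨rfl, rfl⟩; exact hij rfl
        simp [this]
      simp [this, hij]
  -- the difference of the two states
  have hΔ : rhoAvg (k+1) m U f false - rhoAvg (k+1) m U f true
      = ((2^k * m : ℂ))⁻¹ • ∑ b, U b * D * (U b)ᴴ := by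
    unfold rhoAvg
    rw [← smul_sub, ← Finset.sum_sub_distrib]
    simp only [Nat.add_sub_cancel]
    congr 1
    refine Finset.sum_congr rfl fun b _ => ?_
    have hfac : ∀ (S : Finset (Fin (k+1) → Bool)),
        ∑ x ∈ S, U b * Matrix.single x x (1:ℂ) * (U b)ᴴ
          = U b * (∑ x ∈ S, Matrix.single x x (1:ℂ)) * (U b)ᴴ := by
      intro S
      rw [Finset.mul_sum, Finset.sum_mul]
    rw [hfac, hfac, ← hdiag, Matrix.mul_sub, Matrix.sub_mul]
  rw [hΔ]
  -- trace formula for each pair of bases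
  have htr : ∀ b b' : Fin m, (U b * D * (U b)ᴴ * (U b' * D * (U b')ᴴ)).trace
      = ∑ i, ∑ j, ε i * ε j * (((U b)ᴴ * U b') i j * star (((U b)ᴴ * U b') i j)) := by
    intro b b'
    set V : Matrix (Fin (k+1) → Bool) (Fin (k+1) → Bool) ℂ := (U b)ᴴ * U b' with hV
    have hprod : U b * D * (U b)ᴴ * (U b' * D * (U b')ᴴ)
        = U b * (D * V * D * Vᴴ) * (U b)ᴴ := by
      rw [hV]
      calc U b * D * (U b)ᴴ * (U b' * D * (U b')ᴴ)
          = U b * D * (U b)ᴴ * (U b' * D * (U b')ᴴ) * 1 := by rw [mul_one]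
        _ = U b * D * (U b)ᴴ * (U b' * D * (U b')ᴴ) * (U b * (U b)ᴴ) := by rw [(hU b).2]
        _ = U b * (D * ((U b)ᴴ * U b') * D * ((U b)ᴴ * U b')ᴴ) * (U b)ᴴ := by
            rw [Matrix.conjTranspose_mul, Matrix.conjTranspose_conjTranspose]
            noncomm_ring
    rw [hprod, Matrix.trace_mul_comm, ← mul_assoc, (hU b).1, one_mul,
      trace_diag_mul_diag_mul]
  -- diagonal terms
  have hdiag' : ∀ b : Fin m, (U b * D * (U b)ᴴ * (U b * D * (U b)ᴴ)).trace
      = (2:ℂ)^(k+1) := by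
    intro b
    rw [htr b b, (hU b).1]
    have hterm : ∀ i j : Fin (k+1) → Bool,
        ε i * ε j * ((1 : Matrix _ _ ℂ) i j * star ((1 : Matrix _ _ ℂ) i j))
          = if j = i then 1 else 0 := by
      intro i j
      by_cases h : j = i
      · subst h; simp [Matrix.one_apply, hεsq j]
      · simp [Matrix.one_apply, Ne.symm h, h]
    simp only [hterm]
    simp [Finset.sum_ite_eq, Fintype.card_fun]
  -- off-diagonal terms
  have hoff : ∀ b b' : Fin m, b ≠ b' →
      (U b * D * (U b)ᴴ * (U b' * D * (U b')ᴴ)).trace = 0 := by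
    intro b b' hbb
    rw [htr b b']
    have hval : ∀ i j, ((U b)ᴴ * U b') i j * star (((U b)ᴴ * U b') i j)
        = ((2:ℂ)^(k+1))⁻¹ := by
      intro i j
      have h1 := hmub b b' hbb i j
      rw [Complex.star_def, Complex.mul_conj, ← Complex.sq_norm, h1]
      push_cast
      ring
    calc ∑ i, ∑ j, ε i * ε j * (((U b)ᴴ * U b') i j * star (((U b)ᴴ * U b') i j))
        = (∑ i, ∑ j, ε i * ε j) * ((2:ℂ)^(k+1))⁻¹ := by
          rw [Finset.sum_mul]
          refine Finset.sum_congr rfl fun i _ => ?_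
          rw [Finset.sum_mul]
          exact Finset.sum_congr rfl fun j _ => by rw [hval]
      _ = 0 := by rw [← Finset.sum_mul_sum, hεsum]; ring
  -- assemble
  rw [smul_mul_smul_comm, Matrix.trace_smul, Finset.sum_mul_sum]
  simp only [Matrix.trace_sum]
  have hsum : ∑ b : Fin m, ∑ b' : Fin m,
      (U b * D * (U b)ᴴ * (U b' * D * (U b')ᴴ)).trace = (m : ℂ) * 2^(k+1) := by
    have hinner : ∀ b : Fin m, ∑ b' : Fin m,
        (U b * D * (U b)ᴴ * (U b' * D * (U b')ᴴ)).trace = (2:ℂ)^(k+1) := by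
      intro b
      rw [Finset.sum_eq_single b]
      · exact hdiag' b
      · intro b' _ hne; exact hoff b b' (Ne.symm hne)
      · intro h; exact absurd (Finset.mem_univ b) h
    rw [Finset.sum_congr rfl fun b _ => hinner b, Finset.sum_const]
    simp [mul_comm]
  rw [hsum, smul_eq_mul]
  have hm0 : (m : ℂ) ≠ 0 := by
    exact_mod_cast Nat.cast_ne_zero.mpr (Nat.one_le_iff_ne_zero.mp hm)
  have h2 : (2 : ℂ)^k ≠ 0 := pow_ne_zero _ two_ne_zero
  field_simp
  ring
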